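/- Let d ≥ 2 be an integer and let B' be a real number with 0 < B' ≤ (d+1)/(d-1). Then (i) there are no real numbers x > 1 and y > 1 such that both x^(1/d) ≤ (B'·y + 1)/(y + B') and y^(1/d) ≤ (B'·x + 1)/(x + B'); and (ii) there are no real numbers x, y with 0 < x < 1 and 0 < y < 1 such that both x^(1/d) ≥ (B'·y + 1)/(y + B') and y^(1/d) ≥ (B'·x + 1)/(x + B'). -/

import Mathlib

private lemma pair_lt {s : ℝ} (hs : 0 < s) (hne : s ≠ 1) {i d : ℕ}
    (h1 : 1 ≤ i) (h2 : i < d) : s ^ i + s ^ (d - i) < 1 + s ^ d := by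
  have hid : i + (d - i) = d := Nat.add_sub_cancel' h2.le
  have hsd : s ^ i * s ^ (d - i) = s ^ d := by rw [← pow_add, hid]
  have hi0 : i ≠ 0 := by omega
  have hdi0 : d - i ≠ 0 := by omega
  rcases lt_or_gt_of_ne hne with h | h
  · have hA : s ^ i < 1 := pow_lt_one₀ hs.le h hi0
    have hB : s ^ (d - i) < 1 := pow_lt_one₀ hs.le h hdi0
    nlinarith
  · have hA : 1 < s ^ i := one_lt_pow₀ h hi0
    have hB : 1 < s ^ (d - i) := one_lt_pow₀ h hdi0
    nlinarith

private lemma core (d : ℕ) (hd : 2 ≤ d) {s : ℝ} (hs : 0 < s) (hne : s ≠ 1) :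
    2 * ∑ i ∈ Finset.Ico 1 d, s ^ i < ((d : ℝ) - 1) * (1 + s ^ d) := by
  have hrefl : ∑ i ∈ Finset.Ico 1 d, s ^ (d - i) = ∑ i ∈ Finset.Ico 1 d, s ^ i := by
    rw [Finset.sum_Ico_eq_sum_range, Finset.sum_Ico_eq_sum_range]
    rw [← Finset.sum_range_reflect (fun j => s ^ (1 + j)) (d - 1)]
    apply Finset.sum_congr rfl
    intro j hj
    simp only [Finset.mem_range] at hj
    congr 1
    omega
  have hne' : (Finset.Ico 1 d).Nonempty := by
    rw [Finset.nonempty_Ico]; omega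
  have hsum := Finset.sum_lt_sum_of_nonempty hne'
    (f := fun i => s ^ i + s ^ (d - i)) (g := fun _ => 1 + s ^ d)
    (fun i hi => by
      simp only [Finset.mem_Ico] at hi
      exact pair_lt hs hne hi.1 hi.2)
  rw [Finset.sum_add_distrib, hrefl, Finset.sum_const, Nat.card_Ico] at hsum
  have hcard : ((d - 1 : ℕ) : ℝ) = (d : ℝ) - 1 := by
    have : (1:ℕ) ≤ d := by omega
    push_cast [this]; ring
  rw [nsmul_eq_mul, hcard] at hsum
  linarith

private lemma interm (d : ℕ) (hd : 2 ≤ d) (B' : ℝ) (hB0 : 0 < B')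
    (hB : B' ≤ ((d : ℝ) + 1) / ((d : ℝ) - 1)) {s : ℝ} (hs : 0 < s) (hne : s ≠ 1) :
    B' * ((∑ i ∈ Finset.range d, s ^ i) - 1) < ∑ i ∈ Finset.range (d + 1), s ^ i := by
  have hd1 : (0:ℝ) < (d : ℝ) - 1 := by
    have : (2:ℝ) ≤ (d:ℝ) := by exact_mod_cast hd
    linarith
  set T := ∑ i ∈ Finset.Ico 1 d, s ^ i with hT
  have hGd : ∑ i ∈ Finset.range d, s ^ i = 1 + T := by
    rw [Finset.range_eq_Ico, ← Finset.sum_Ico_consecutive _ (by omega : 0 ≤ 1) (by omega : 1 ≤ d)]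
    simp
    exact hT.symm
  have hGd1 : ∑ i ∈ Finset.range (d + 1), s ^ i = 1 + T + s ^ d := by
    rw [Finset.sum_range_succ, hGd]
  have hcore := core d hd hs hne
  have hT0 : 0 ≤ T := Finset.sum_nonneg fun i _ => pow_nonneg hs.le i
  -- (d-1) * G(d+1) > (d+1) * T ≥ (d-1) * B' * T
  have h1 : ((d:ℝ) + 1) * T < ((d:ℝ) - 1) * (1 + T + s ^ d) := by nlinarith
  have h2 : ((d:ℝ) - 1) * B' * T ≤ ((d:ℝ) + 1) * T := by
    have : ((d:ℝ) - 1) * B' ≤ (d:ℝ) + 1 := by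
      rw [le_div_iff₀ hd1] at hB; linarith
    exact mul_le_mul_of_nonneg_right this hT0
  have h3 : ((d:ℝ) - 1) * (B' * T) < ((d:ℝ) - 1) * (1 + T + s ^ d) := by nlinarith
  have h4 : B' * T < 1 + T + s ^ d := lt_of_mul_lt_mul_left h3 hd1.le
  rw [hGd, hGd1]; linarith

private lemma keyA (d : ℕ) (hd : 2 ≤ d) (B' : ℝ) (hB0 : 0 < B')
    (hB : B' ≤ ((d : ℝ) + 1) / ((d : ℝ) - 1)) {s : ℝ} (hs : 1 < s) :
    (B' * s ^ d + 1) / (s ^ d + B') < s := by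
  have hs0 : 0 < s := by linarith
  have hden : 0 < s ^ d + B' := by positivity
  rw [div_lt_iff₀ hden]
  have h := interm d hd B' hB0 hB hs0 (ne_of_gt hs)
  have hmul := mul_lt_mul_of_pos_right h (by linarith : (0:ℝ) < s - 1)
  have e1 : (∑ i ∈ Finset.range (d + 1), s ^ i) * (s - 1) = s ^ (d+1) - 1 :=
    geom_sum_mul s (d+1)
  have e2 : ((∑ i ∈ Finset.range d, s ^ i) - 1) * (s - 1) = s ^ d - s := by
    have := geom_sum_mul s d; nlinarith [this]
  rw [mul_assoc, e1, e2] at hmul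
  have hpow : s ^ (d + 1) = s ^ d * s := pow_succ s d
  nlinarith

private lemma keyB (d : ℕ) (hd : 2 ≤ d) (B' : ℝ) (hB0 : 0 < B')
    (hB : B' ≤ ((d : ℝ) + 1) / ((d : ℝ) - 1)) {s : ℝ} (hs0 : 0 < s) (hs1 : s < 1) :
    s < (B' * s ^ d + 1) / (s ^ d + B') := by
  have hden : 0 < s ^ d + B' := by positivity
  rw [lt_div_iff₀ hden]
  have h := interm d hd B' hB0 hB hs0 (ne_of_lt hs1)
  have hmul := mul_lt_mul_of_pos_right h (by linarith : (0:ℝ) < 1 - s)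
  have e1 : (∑ i ∈ Finset.range (d + 1), s ^ i) * (1 - s) = 1 - s ^ (d+1) := by
    have := geom_sum_mul s (d+1); nlinarith [this]
  have e2 : ((∑ i ∈ Finset.range d, s ^ i) - 1) * (1 - s) = s - s ^ d := by
    have := geom_sum_mul s d; nlinarith [this]
  rw [mul_assoc, e1, e2] at hmul
  have hpow : s ^ (d + 1) = s ^ d * s := pow_succ s d
  nlinarith

theorem no_offdiagonal_solutions (d : ℕ) (hd : 2 ≤ d) (B' : ℝ)
    (hB0 : 0 < B') (hB : B' ≤ ((d : ℝ) + 1) / ((d : ℝ) - 1)) :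
    (¬ ∃ x y : ℝ, 1 < x ∧ 1 < y ∧
        x ^ ((1 : ℝ) / d) ≤ (B' * y + 1) / (y + B') ∧
        y ^ ((1 : ℝ) / d) ≤ (B' * x + 1) / (x + B')) ∧
    (¬ ∃ x y : ℝ, 0 < x ∧ x < 1 ∧ 0 < y ∧ y < 1 ∧
        (B' * y + 1) / (y + B') ≤ x ^ ((1 : ℝ) / d) ∧
        (B' * x + 1) / (x + B') ≤ y ^ ((1 : ℝ) / d)) := by
  have hdR : ((d:ℝ)) ≠ 0 := by positivity
  have hsd : ∀ x : ℝ, 0 < x → (x ^ ((1:ℝ)/d)) ^ d = x := by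
    intro x hx
    rw [← Real.rpow_natCast (x ^ ((1:ℝ)/d)) d, ← Real.rpow_mul hx.le,
      one_div, inv_mul_cancel₀ hdR, Real.rpow_one]
  constructor
  · rintro ⟨x, y, hx, hy, h1, h2⟩
    set sx := x ^ ((1:ℝ)/d) with hsx
    set sy := y ^ ((1:ℝ)/d) with hsy
    have hx0 : (0:ℝ) < x := by linarith
    have hy0 : (0:ℝ) < y := by linarith
    have hsx1 : 1 < sx := Real.one_lt_rpow_iff_of_pos hx0 |>.mpr (Or.inl ⟨hx, by positivity⟩)
    have hsy1 : 1 < sy := Real.one_lt_rpow_iff_of_pos hy0 |>.mpr (Or.inl ⟨hy, by positivity⟩)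
    have kx := keyA d hd B' hB0 hB hsx1
    have ky := keyA d hd B' hB0 hB hsy1
    rw [hsd x hx0] at kx
    rw [hsd y hy0] at ky
    -- sx ≤ f(y) < sy and sy ≤ f(x) < sx
    have := lt_of_le_of_lt h1 ky
    have := lt_of_le_of_lt h2 kx
    linarith
  · rintro ⟨x, y, hx0, hx1, hy0, hy1, h1, h2⟩
    set sx := x ^ ((1:ℝ)/d) with hsx
    set sy := y ^ ((1:ℝ)/d) with hsy
    have hp : (0:ℝ) < (1:ℝ)/d := by positivity
    have hsx0 : 0 < sx := Real.rpow_pos_of_pos hx0 _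
    have hsy0 : 0 < sy := Real.rpow_pos_of_pos hy0 _
    have hsx1 : sx < 1 := Real.rpow_lt_one hx0.le hx1 hp
    have hsy1 : sy < 1 := Real.rpow_lt_one hy0.le hy1 hp
    have kx := keyB d hd B' hB0 hB hsx0 hsx1
    have ky := keyB d hd B' hB0 hB hsy0 hsy1
    rw [hsd x hx0] at kx
    rw [hsd y hy0] at ky
    have := lt_of_lt_of_le ky h1
    have := lt_of_lt_of_le kx h2
    linarith
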